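/- Let n be a finite type, H : ℝ → Matrix n n ℂ a continuous function, T > 0, and suppose U : ℝ → Matrix n n ℂ satisfies U(0) = 1 and HasDerivAt U (-i • (H(t) * U(t))) t for all t ∈ [0, T]. For N ∈ ℕ, N ≥ 1, set Δt := T/N and define the time-ordered Euler product P_N := exp(-i Δt • H((N-1)Δt)) * exp(-i Δt • H((N-2)Δt)) * ⋯ * exp(-i Δt • H(0)) (later times on the left). Then P_N converges to U(T) as N → ∞ (with respect to any norm on Matrix n n ℂ). -/

import Mathlib

section myaux
open NormedSpace
attribute [local instance] Matrix.linftyOpNormedRing Matrix.linftyOpNormedAlgebra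
variable {n : Type*} [Fintype n] [DecidableEq n] [Nonempty n]

lemma my_norm_exp_le (x : Matrix n n ℂ) : ‖exp x‖ ≤ Real.exp ‖x‖ := by
  rw [Real.exp_eq_exp_ℝ, NormedSpace.exp_eq_tsum_div,
    show exp x = ∑' k : ℕ, (Nat.factorial k : ℂ)⁻¹ • x ^ k from congrFun (NormedSpace.exp_eq_tsum ℂ) x]
  refine (norm_tsum_le_tsum_norm (NormedSpace.norm_expSeries_summable' x)).trans ?_
  refine Summable.tsum_le_tsum (fun k => ?_) (NormedSpace.norm_expSeries_summable' x)
    (Real.summable_pow_div_factorial ‖x‖)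
  rw [norm_smul, norm_inv, Complex.norm_natCast, div_eq_inv_mul]
  gcongr
  exact norm_pow_le x k

lemma slice_est (H : ℝ → Matrix n n ℂ) (U : ℝ → Matrix n n ℂ) (T M K ε : ℝ)
    (hMH : ∀ t ∈ Set.Icc (0:ℝ) T, ‖H t‖ ≤ M)
    (hKU : ∀ t ∈ Set.Icc (0:ℝ) T, ‖U t‖ ≤ K)
    (hU : ∀ t ∈ Set.Icc (0:ℝ) T, HasDerivAt U ((-Complex.I) • (H t * U t)) t)
    (a h : ℝ) (ha : 0 ≤ a) (hh : 0 ≤ h) (hah : a + h ≤ T)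
    (hε : ∀ s ∈ Set.Icc a (a+h), ‖H s - H a‖ ≤ ε) :
    ‖U (a+h) - exp (h • ((-Complex.I) • H a)) * U a‖
      ≤ Real.exp (M*h) * (Real.exp (M*h) * (ε * K) * h) := by
  have haT : a ∈ Set.Icc (0:ℝ) T := ⟨ha, by linarith⟩
  set A : Matrix n n ℂ := (-Complex.I) • H a with hA
  have hAnorm : ‖A‖ ≤ M := by
    rw [hA, norm_smul, norm_neg, Complex.norm_I, one_mul]; exact hMH a haT
  have hM0 : 0 ≤ M := le_trans (norm_nonneg _) (hMH a haT)
  have hK0 : 0 ≤ K := le_trans (norm_nonneg _) (hKU a haT)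
  have hε0 : 0 ≤ ε := le_trans (norm_nonneg _) (hε a ⟨le_refl a, by linarith⟩)
  set E : ℝ → Matrix n n ℂ := fun s => exp ((s - a) • (-A)) with hEdef
  have hexpeq : (exp : Matrix n n ℂ → Matrix n n ℂ) = exp := rfl
  have hE_deriv : ∀ s : ℝ, HasDerivAt E ((-A) * E s) s := by
    intro s
    have h1 := hasDerivAt_exp_smul_const' (𝕂 := ℝ) (-A) (s - a)
    have h2 : HasDerivAt (fun u : ℝ => u - a) 1 s := (hasDerivAt_id s).sub_const a
    have h3 := HasDerivAt.scomp s h1 h2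
    simp only [Function.comp_def, one_smul] at h3
    exact h3
  have hEnorm : ∀ s ∈ Set.Icc a (a+h), ‖E s‖ ≤ Real.exp (M*h) := by
    intro s hs
    refine (my_norm_exp_le _).trans (Real.exp_le_exp.2 ?_)
    rw [norm_smul, norm_neg, Real.norm_eq_abs, abs_of_nonneg (by linarith [hs.1])]
    calc (s - a) * ‖A‖ ≤ h * M := by
          apply mul_le_mul (by linarith [hs.2]) hAnorm (norm_nonneg _) hh
      _ = M * h := mul_comm _ _
  have hcomm : ∀ s : ℝ, (-A) * E s = E s * (-A) := by
    intro s
    exact (((Commute.refl (-A)).smul_right ((s - a) : ℝ)).exp_right).eq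
  set g : ℝ → Matrix n n ℂ := fun s => E s * U s with hgdef
  have hg : ∀ s ∈ Set.Icc a (a+h),
      HasDerivWithinAt g (E s * ((-Complex.I) • ((H s - H a) * U s))) (Set.Icc a (a+h)) s := by
    intro s hs
    have hsT : s ∈ Set.Icc (0:ℝ) T := ⟨by linarith [hs.1], by linarith [hs.2]⟩
    have hd := (hE_deriv s).mul (hU s hsT)
    have heq : (-A) * E s * U s + E s * ((-Complex.I) • (H s * U s))
        = E s * ((-Complex.I) • ((H s - H a) * U s)) := by
      rw [hcomm s, mul_assoc, ← mul_add]
      congr 1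
      simp only [hA, neg_smul, neg_mul, smul_mul_assoc, sub_mul, smul_sub]
      abel
    rw [heq] at hd
    exact hd.hasDerivWithinAt
  have hgbound : ∀ s ∈ Set.Icc a (a+h),
      ‖E s * ((-Complex.I) • ((H s - H a) * U s))‖ ≤ Real.exp (M*h) * (ε * K) := by
    intro s hs
    have hsT : s ∈ Set.Icc (0:ℝ) T := ⟨by linarith [hs.1], by linarith [hs.2]⟩
    calc ‖E s * ((-Complex.I) • ((H s - H a) * U s))‖
        ≤ ‖E s‖ * ‖(-Complex.I) • ((H s - H a) * U s)‖ := norm_mul_le _ _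
      _ = ‖E s‖ * ‖(H s - H a) * U s‖ := by
          rw [norm_smul, norm_neg, Complex.norm_I, one_mul]
      _ ≤ Real.exp (M*h) * (ε * K) := by
          apply mul_le_mul (hEnorm s hs) ?_ (norm_nonneg _) (Real.exp_nonneg _)
          exact (norm_mul_le _ _).trans
            (mul_le_mul (hε s hs) (hKU s hsT) (norm_nonneg _) hε0)
  have hmvt := (convex_Icc a (a+h)).norm_image_sub_le_of_norm_hasDerivWithin_le
    hg hgbound ⟨le_refl a, by linarith⟩ ⟨by linarith, le_refl (a+h)⟩
  have hga : g a = U a := by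
    simp [hgdef, hEdef, sub_self, zero_smul, NormedSpace.exp_zero]
  have hEU : exp (h • A) * E (a+h) = 1 := by
    rw [hEdef]
    simp only [add_sub_cancel_left]
    refine (NormedSpace.exp_add_of_commute (((Commute.refl A).neg_right).smul_left h |>.smul_right h)).symm.trans ?_
    rw [smul_neg, add_neg_cancel, NormedSpace.exp_zero]
  have key : U (a+h) - exp (h • A) * U a = exp (h • A) * (g (a+h) - g a) := by
    rw [mul_sub, hga, hgdef]
    congr 1
    rw [← mul_assoc, hEU, one_mul]
  rw [hA] at key ⊢
  rw [key]
  have hnorm1 : ‖exp (h • ((-Complex.I) • H a))‖ ≤ Real.exp (M*h) := by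
    refine (my_norm_exp_le _).trans (Real.exp_le_exp.2 ?_)
    rw [norm_smul, Real.norm_eq_abs, abs_of_nonneg hh]
    rw [← hA]
    calc h * ‖A‖ ≤ h * M := by apply mul_le_mul_of_nonneg_left hAnorm hh
      _ = M * h := mul_comm _ _
  calc ‖exp (h • ((-Complex.I) • H a)) * (g (a+h) - g a)‖
      ≤ ‖exp (h • ((-Complex.I) • H a))‖ * ‖g (a+h) - g a‖ := norm_mul_le _ _
    _ ≤ Real.exp (M*h) * (Real.exp (M*h) * (ε * K) * h) := by
        apply mul_le_mul hnorm1 ?_ (norm_nonneg _) (Real.exp_nonneg _)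
        refine hmvt.trans ?_
        rw [show (a+h) - a = h by ring, Real.norm_eq_abs, abs_of_nonneg hh]

lemma my_prod_succ (f : ℕ → Matrix n n ℂ) (N : ℕ) :
    (((List.range (N+1)).reverse).map f).prod = f N * (((List.range N).reverse).map f).prod := by
  simp [List.range_succ]

set_option maxHeartbeats 1000000 in
theorem aux_tendsto (H : ℝ → Matrix n n ℂ) (hHcont : Continuous H)
    (T : ℝ) (hT : 0 < T) (U : ℝ → Matrix n n ℂ) (hU0 : U 0 = 1)
    (hU : ∀ t ∈ Set.Icc (0 : ℝ) T, ∀ i j,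
      HasDerivAt (fun s => U s i j) (((-Complex.I) • (H t * U t)) i j) t) :
    Filter.Tendsto
      (fun N : ℕ =>
        (((List.range N).reverse).map
          (fun k : ℕ =>
            exp ((-Complex.I * ((T / N : ℝ) : ℂ)) • H (k * (T / N))))).prod)
      Filter.atTop (nhds (U T)) := by
  have hU' : ∀ t ∈ Set.Icc (0:ℝ) T, HasDerivAt U ((-Complex.I) • (H t * U t)) t := by
    intro t ht
    have h1 : HasDerivAt (fun s => Matrix.of.symm (U s))
        (Matrix.of.symm ((-Complex.I) • (H t * U t))) t :=
      hasDerivAt_pi.2 fun i => hasDerivAt_pi.2 fun j => hU t ht i j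
    let ψ : (n → n → ℂ) →ₗ[ℝ] Matrix n n ℂ :=
      { toFun := Matrix.of, map_add' := fun _ _ => rfl, map_smul' := fun _ _ => rfl }
    exact ψ.toContinuousLinearMap.hasFDerivAt.comp_hasDerivAt t h1
  obtain ⟨M0, hM0⟩ := (isCompact_Icc (a := (0:ℝ)) (b := T)).exists_bound_of_continuousOn
    hHcont.continuousOn
  set M := max M0 0 with hMdef
  have hMH : ∀ t ∈ Set.Icc (0:ℝ) T, ‖H t‖ ≤ M := fun t ht => (hM0 t ht).trans (le_max_left _ _)
  have hM : 0 ≤ M := le_max_right _ _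
  have hUcont : ContinuousOn U (Set.Icc 0 T) :=
    fun t ht => (hU' t ht).continuousAt.continuousWithinAt
  obtain ⟨K0, hK0⟩ := isCompact_Icc.exists_bound_of_continuousOn hUcont
  set K := max K0 0 with hKdef
  have hKU : ∀ t ∈ Set.Icc (0:ℝ) T, ‖U t‖ ≤ K := fun t ht => (hK0 t ht).trans (le_max_left _ _)
  have hK : 0 ≤ K := le_max_right _ _
  have hsmul : ∀ (r : ℝ) (X : Matrix n n ℂ),
      (-Complex.I * (r:ℂ)) • X = r • ((-Complex.I) • X) := by
    intro r X
    ext i j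
    simp [Matrix.smul_apply, Complex.real_smul]
    ring
  have hunif := Metric.uniformContinuousOn_iff_le.1
    ((isCompact_Icc (a := (0:ℝ)) (b := T)).uniformContinuousOn_of_continuous hHcont.continuousOn)
  refine Metric.tendsto_atTop.2 ?_
  intro ε0 hε0
  set C : ℝ := Real.exp (M*T) * Real.exp (M*T) * K * T * Real.exp (M*T) with hCdef
  have hC : 0 ≤ C := by positivity
  set ε : ℝ := ε0 / (C + 1) with hεdef
  have hεpos : 0 < ε := div_pos hε0 (by linarith)
  obtain ⟨δ, hδpos, hδ⟩ := hunif ε hεpos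
  obtain ⟨N1, hN1⟩ := exists_nat_ge (T / δ)
  refine ⟨max N1 1, fun N hN => ?_⟩
  have hN1' : (1:ℕ) ≤ N := le_trans (le_max_right _ _) hN
  have hNpos : (0:ℝ) < N := by exact_mod_cast Nat.lt_of_lt_of_le Nat.zero_lt_one hN1'
  set h : ℝ := T / N with hhdef
  have hh0 : 0 < h := div_pos hT hNpos
  have hNh : (N:ℝ) * h = T := by
    rw [hhdef]; field_simp
  have h1N : (1:ℝ) ≤ (N:ℝ) := by exact_mod_cast hN1'
  have hhT : h ≤ T := by
    rw [hhdef, div_le_iff₀ hNpos]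
    nlinarith [hT.le]
  have hhδ : h ≤ δ := by
    rw [hhdef, div_le_iff₀ hNpos]
    have hTδN : T / δ ≤ (N:ℝ) := by
      refine le_trans hN1 ?_
      exact_mod_cast le_trans (le_max_left _ _) hN
    calc T = (T/δ) * δ := by field_simp
      _ ≤ (N:ℝ) * δ := mul_le_mul_of_nonneg_right hTδN hδpos.le
      _ = δ * N := mul_comm _ _
  have hεH : ∀ s t : ℝ, s ∈ Set.Icc (0:ℝ) T → t ∈ Set.Icc (0:ℝ) T →
      |s - t| ≤ h → ‖H s - H t‖ ≤ ε := by
    intro s t hs ht hst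
    have := hδ s hs t ht (by rw [Real.dist_eq]; exact hst.trans hhδ)
    rwa [dist_eq_norm] at this
  set G := Real.exp (M*h) with hGdef
  have hG1 : 1 ≤ G := Real.one_le_exp (mul_nonneg hM hh0.le)
  have hG0 : 0 ≤ G := le_trans zero_le_one hG1
  set err := G * (G * (ε*K) * h) with herrdef
  have herr0 : 0 ≤ err := mul_nonneg hG0 (mul_nonneg (mul_nonneg hG0 (mul_nonneg hεpos.le hK)) hh0.le)
  rw [dist_eq_norm]
  set f := fun k : ℕ => exp ((-Complex.I * ((h:ℝ):ℂ)) • H (k * h)) with hfdef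
  have key : ∀ k : ℕ, k ≤ N →
      ‖(((List.range k).reverse).map f).prod - U (k * h)‖ ≤ k * err * G ^ k := by
    intro k
    induction k with
    | zero => intro _; simp [hU0]
    | succ k ih =>
      intro hk1
      have hk : k ≤ N := Nat.le_of_succ_le hk1
      have ihk := ih hk
      have hkh0 : 0 ≤ (k:ℝ) * h := by positivity
      have hk1N : (k:ℝ) + 1 ≤ (N:ℝ) := by exact_mod_cast hk1
      have hkh1T : ((k:ℝ)) * h + h ≤ T := by nlinarith [hh0.le]
      have hkhT : (k:ℝ) * h ≤ T := by linarith [hh0.le]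
      have hslice := slice_est H U T M K ε hMH hKU hU' ((k:ℝ)*h) h hkh0 hh0.le hkh1T
        (fun s hs => hεH s ((k:ℝ)*h) ⟨by linarith [hs.1], by linarith [hs.2]⟩
          ⟨hkh0, hkhT⟩ (abs_le.2 ⟨by linarith [hs.1], by linarith [hs.2]⟩))
      rw [← hsmul] at hslice
      rw [my_prod_succ]
      have hcast : ((k+1:ℕ):ℝ) * h = (k:ℝ)*h + h := by push_cast; ring
      rw [hcast]
      have hsplit : f k * ((List.range k).reverse.map f).prod - U ((k:ℝ)*h + h)
          = f k * (((List.range k).reverse.map f).prod - U ((k:ℝ)*h))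
            + (f k * U ((k:ℝ)*h) - U ((k:ℝ)*h + h)) := by
        rw [mul_sub]; abel
      rw [hsplit]
      have hfk : ‖f k‖ ≤ G := by
        refine (my_norm_exp_le _).trans (Real.exp_le_exp.2 ?_)
        rw [norm_smul, norm_mul, norm_neg, Complex.norm_I, one_mul, Complex.norm_real,
          Real.norm_eq_abs, abs_of_nonneg hh0.le]
        calc h * ‖H ((k:ℝ)*h)‖ ≤ h * M :=
              mul_le_mul_of_nonneg_left (hMH _ ⟨hkh0, hkhT⟩) hh0.le
          _ = M * h := mul_comm _ _
      have hG1k : (1:ℝ) ≤ G ^ (k+1) := one_le_pow₀ hG1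
      calc ‖f k * (((List.range k).reverse.map f).prod - U ((k:ℝ)*h))
              + (f k * U ((k:ℝ)*h) - U ((k:ℝ)*h + h))‖
          ≤ ‖f k * (((List.range k).reverse.map f).prod - U ((k:ℝ)*h))‖
              + ‖f k * U ((k:ℝ)*h) - U ((k:ℝ)*h + h)‖ := norm_add_le _ _
        _ ≤ ‖f k‖ * ‖((List.range k).reverse.map f).prod - U ((k:ℝ)*h)‖
              + ‖U ((k:ℝ)*h + h) - f k * U ((k:ℝ)*h)‖ := by
            rw [norm_sub_rev (f k * U ((k:ℝ)*h))]
            gcongr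
            exact norm_mul_le _ _
        _ ≤ G * ((k:ℝ) * err * G ^ k) + err :=
            add_le_add (mul_le_mul hfk ihk (norm_nonneg _) hG0) hslice
        _ ≤ ((k:ℝ)+1) * err * G ^ (k+1) := by
            have h1 : G * ((k:ℝ) * err * G ^ k) = (k:ℝ) * err * G ^ (k+1) := by ring
            have h2 : err ≤ err * G ^ (k+1) := le_mul_of_one_le_right herr0 hG1k
            have hk0 : (0:ℝ) ≤ (k:ℝ) := Nat.cast_nonneg k
            nlinarith
        _ = ((k+1:ℕ):ℝ) * err * G ^ (k+1) := by push_cast; ring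
  have hkey := key N le_rfl
  rw [hNh] at hkey
  calc ‖((List.range N).reverse.map f).prod - U T‖
      ≤ (N:ℝ) * err * G ^ N := hkey
    _ ≤ C * ε := by
        have hGN : G ^ N = Real.exp ((N:ℝ) * (M*h)) := (Real.exp_nat_mul _ N).symm
        have hNMh : (N:ℝ) * (M * h) = M * T := by rw [← hNh]; ring
        have hGexp : G ≤ Real.exp (M*T) :=
          Real.exp_le_exp.2 (mul_le_mul_of_nonneg_left hhT hM)
        have hNerr : (N:ℝ) * err = G * G * (ε*K) * T := by
          rw [herrdef, ← hNh]; ring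
        rw [hGN, hNMh, hNerr, hCdef]
        have hGG : G * G ≤ Real.exp (M*T) * Real.exp (M*T) :=
          mul_le_mul hGexp hGexp hG0 (Real.exp_nonneg _)
        calc G * G * (ε*K) * T * Real.exp (M*T)
            = (G * G) * (ε * K * T * Real.exp (M*T)) := by ring
          _ ≤ (Real.exp (M*T) * Real.exp (M*T)) * (ε * K * T * Real.exp (M*T)) :=
              mul_le_mul_of_nonneg_right hGG
                (mul_nonneg (mul_nonneg (mul_nonneg hεpos.le hK) hT.le) (Real.exp_nonneg _))
          _ = Real.exp (M*T) * Real.exp (M*T) * K * T * Real.exp (M*T) * ε := by ring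
    _ < ε0 := by
        rw [hεdef]
        calc C * (ε0 / (C+1)) < (C+1) * (ε0 / (C+1)) :=
              mul_lt_mul_of_pos_right (lt_add_one C) (div_pos hε0 (by linarith))
          _ = ε0 := by field_simp

end myaux

open scoped Matrix

attribute [local instance] Matrix.normedAddCommGroup Matrix.normedSpace

set_option maxHeartbeats 1000000 in
/-- Convergence of the time-ordered Euler product of slice propagators
`exp(-i Δt H(k Δt))` (later times on the left) to the exact propagator `U(T)`. -/
theorem stmt_2 {n : Type*} [Fintype n] [DecidableEq n]
    (H : ℝ → Matrix n n ℂ) (hHcont : Continuous H)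
    (T : ℝ) (hT : 0 < T)
    (U : ℝ → Matrix n n ℂ) (hU0 : U 0 = 1)
    (hU : ∀ t ∈ Set.Icc (0 : ℝ) T, HasDerivAt U ((-Complex.I) • (H t * U t)) t) :
    Filter.Tendsto
      (fun N : ℕ =>
        (((List.range N).reverse).map
          (fun k : ℕ =>
            NormedSpace.exp ((-Complex.I * ((T / N : ℝ) : ℂ)) • H (k * (T / N))))).prod)
      Filter.atTop (nhds (U T)) := by
  rcases isEmpty_or_nonempty n with hE | hNE
  · haveI : Subsingleton (Matrix n n ℂ) :=
      ⟨fun a b => by funext i; exact (IsEmpty.false i).elim⟩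
    exact Filter.Tendsto.congr (fun N => Subsingleton.elim _ _) tendsto_const_nhds
  · exact aux_tendsto H hHcont T hT U hU0
      (fun t ht i j => hasDerivAt_pi.1 (hasDerivAt_pi.1 (hU t ht) i) j)
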